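/- In the multi-block model with p(n) = α log n / n and p′(n) = o(p(n)): if α b_k^{(i)} > 1 for all blocks i and all types k, and n² p′(n) → ∞, then P[G_n is connected] → 1 as n → ∞. -/

import Mathlib

open Finset Filter
open scoped Classical

/-- Probability weight of a specific simple graph `G` on `Fin N` when each edge `{v,w}`
(`v < w`) is present independently with probability `pE v w`. -/
noncomputable def graphWeight {N : ℕ} (pE : Fin N → Fin N → ℝ) (G : SimpleGraph (Fin N)) : ℝ :=
  ∏ v : Fin N, ∏ w ∈ Finset.univ.filter (fun w => v < w),
    (if G.Adj v w then pE v w else 1 - pE v w)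

/-- Probability that the random graph on `Fin N`, whose edges are present independently with
probabilities `pE`, belongs to the set `S`. -/
noncomputable def graphProb {N : ℕ} (pE : Fin N → Fin N → ℝ) (S : Set (SimpleGraph (Fin N))) : ℝ :=
  ∑ G : SimpleGraph (Fin N), (if G ∈ S then graphWeight pE G else 0)

/-- Edge probability in the multi-block model between vertices of global types `s` and `t`
(a global type is a pair of a block index and a type index within the block): within a
block it is `c^{(i)}_{kl} p`, across blocks it is `d_{(i,k),(j,l)} p'`, capped at `1`. -/
noncomputable def blockEdgeP {r : ℕ} {mi : Fin r → ℕ}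
    (cmat : ∀ i, Fin (mi i) → Fin (mi i) → ℝ)
    (d : ((i : Fin r) × Fin (mi i)) → ((i : Fin r) × Fin (mi i)) → ℝ)
    (p p' : ℝ) (s t : (i : Fin r) × Fin (mi i)) : ℝ :=
  if h : s.1 = t.1 then min (cmat s.1 s.2 (Fin.cast (congrArg mi h.symm) t.2) * p) 1
  else min (d s t * p') 1

def pairs (N : ℕ) : Finset (Fin N × Fin N) := Finset.univ.filter (fun q => q.1 < q.2)

noncomputable def graphEquiv (N : ℕ) :
    SimpleGraph (Fin N) ≃ ({q : Fin N × Fin N // q.1 < q.2} → Bool) where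
  toFun G q := decide (G.Adj q.1.1 q.1.2)
  invFun f := SimpleGraph.fromRel (fun v w => ∃ h : v < w, f ⟨(v, w), h⟩ = true)
  left_inv G := by
    ext v w
    simp only [SimpleGraph.fromRel_adj]
    constructor
    · rintro ⟨hne, ⟨h1, h2⟩ | ⟨h1, h2⟩⟩
      · simpa using h2
      · exact (show G.Adj w v by simpa using h2).symm
    · intro hadj
      refine ⟨G.ne_of_adj hadj, ?_⟩
      rcases lt_trichotomy v w with h | h | h
      · exact Or.inl ⟨h, by simpa using hadj⟩
      · exact absurd h (G.ne_of_adj hadj)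
      · exact Or.inr ⟨h, by simpa using hadj.symm⟩
  right_inv f := by
    funext q
    obtain ⟨⟨v, w⟩, hq⟩ := q
    have hwv : ¬ (w < v) := asymm hq
    by_cases hf : f ⟨(v, w), hq⟩ = true
    · simp [SimpleGraph.fromRel_adj, hq, hq.ne, hf, hwv]
    · simp [SimpleGraph.fromRel_adj, hq, hq.ne, hf, hwv]

lemma sum_graphs_prod {N : ℕ} (w : Fin N × Fin N → Bool → ℝ) :
    ∑ G : SimpleGraph (Fin N), ∏ q ∈ pairs N, w q (decide (G.Adj q.1 q.2)) =
      ∏ q ∈ pairs N, (w q true + w q false) := by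
  rw [← Equiv.sum_comp (graphEquiv N).symm
    (fun G => ∏ q ∈ pairs N, w q (decide (G.Adj q.1 q.2)))]
  have h1 : ∀ f : {q : Fin N × Fin N // q.1 < q.2} → Bool,
      ∏ q ∈ pairs N, w q (decide (((graphEquiv N).symm f).Adj q.1 q.2)) =
      ∏ x : {q : Fin N × Fin N // q.1 < q.2}, w x.1 (f x) := by
    intro f
    rw [Finset.prod_subtype (pairs N) (p := fun q : Fin N × Fin N => q.1 < q.2)
      (by simp [pairs])]
    refine Finset.prod_congr rfl fun x _ => ?_
    have : (graphEquiv N) ((graphEquiv N).symm f) = f := Equiv.apply_symm_apply _ _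
    have := congrFun this x
    simp only [graphEquiv] at this
    rw [show decide ((((graphEquiv N).symm f)).Adj x.1.1 x.1.2) = f x from this]
  simp only [h1]
  rw [Finset.prod_subtype (pairs N) (p := fun q : Fin N × Fin N => q.1 < q.2)
      (by simp [pairs]) (f := fun q => w q true + w q false)]
  calc (∑ f : {q : Fin N × Fin N // q.1 < q.2} → Bool, ∏ x, w x.1 (f x))
      = ∑ f ∈ Fintype.piFinset (fun _ : {q : Fin N × Fin N // q.1 < q.2} =>
          (Finset.univ : Finset Bool)), ∏ x, w x.1 (f x) := by rw [Fintype.piFinset_univ]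
    _ = ∏ x : {q : Fin N × Fin N // q.1 < q.2}, ∑ b, w x.1 b :=
        (Finset.prod_univ_sum _ _).symm
    _ = ∏ x : {q : Fin N × Fin N // q.1 < q.2}, (w x.1 true + w x.1 false) := by
        refine Finset.prod_congr rfl fun x _ => ?_
        rw [Fintype.sum_bool]

lemma graphWeight_eq_prod {N : ℕ} (pE : Fin N → Fin N → ℝ) (G : SimpleGraph (Fin N)) :
    graphWeight pE G =
      ∏ q ∈ pairs N, (if G.Adj q.1 q.2 then pE q.1 q.2 else 1 - pE q.1 q.2) := by
  unfold graphWeight pairs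
  rw [Finset.prod_filter, Fintype.prod_prod_type]
  exact Finset.prod_congr rfl fun v _ => (Finset.prod_filter _ _)

section probs
variable {N : ℕ} {pE : Fin N → Fin N → ℝ} (h0 : ∀ v w, 0 ≤ pE v w) (h1 : ∀ v w, pE v w ≤ 1)

include h0 h1 in
lemma graphWeight_nonneg (G : SimpleGraph (Fin N)) : 0 ≤ graphWeight pE G := by
  rw [graphWeight_eq_prod]
  refine Finset.prod_nonneg fun q _ => ?_
  split
  · exact h0 _ _
  · linarith [h1 q.1 q.2]

include h0 h1 in
lemma graphProb_nonneg (S : Set (SimpleGraph (Fin N))) : 0 ≤ graphProb pE S := by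
  refine Finset.sum_nonneg fun G _ => ?_
  split
  · exact graphWeight_nonneg h0 h1 G
  · exact le_rfl

lemma sum_graphWeight : ∑ G : SimpleGraph (Fin N), graphWeight pE G = 1 := by
  set w : Fin N × Fin N → Bool → ℝ := fun q b =>
    if b = true then pE q.1 q.2 else 1 - pE q.1 q.2 with hw
  have key := sum_graphs_prod (N := N) w
  have h1' : ∀ G : SimpleGraph (Fin N),
      graphWeight pE G = ∏ q ∈ pairs N, w q (decide (G.Adj q.1 q.2)) := by
    intro G
    rw [graphWeight_eq_prod]
    refine Finset.prod_congr rfl fun q _ => ?_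
    by_cases h : G.Adj q.1 q.2 <;> simp [hw, h]
  rw [Finset.sum_congr rfl fun G _ => h1' G, key]
  refine Finset.prod_eq_one fun q _ => by simp [hw]

include h0 h1 in
lemma graphProb_mono {S T : Set (SimpleGraph (Fin N))} (hST : S ⊆ T) :
    graphProb pE S ≤ graphProb pE T := by
  refine Finset.sum_le_sum fun G _ => ?_
  by_cases h : G ∈ S
  · simp [h, hST h]
  · simp only [h, if_false]
    split
    · exact graphWeight_nonneg h0 h1 G
    · exact le_rfl

include h0 h1 in
lemma graphProb_le_one (S : Set (SimpleGraph (Fin N))) : graphProb pE S ≤ 1 := by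
  rw [← sum_graphWeight (pE := pE)]
  refine Finset.sum_le_sum fun G _ => ?_
  split
  · exact le_rfl
  · exact graphWeight_nonneg h0 h1 G

lemma graphProb_compl (S : Set (SimpleGraph (Fin N))) :
    graphProb pE Sᶜ = 1 - graphProb pE S := by
  rw [← sum_graphWeight (pE := pE)]
  unfold graphProb
  rw [← Finset.sum_sub_distrib]
  refine Finset.sum_congr rfl fun G _ => ?_
  by_cases h : G ∈ S <;> simp [h]

include h0 h1 in
lemma graphProb_union_le (S T : Set (SimpleGraph (Fin N))) :
    graphProb pE (S ∪ T) ≤ graphProb pE S + graphProb pE T := by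
  unfold graphProb
  rw [← Finset.sum_add_distrib]
  refine Finset.sum_le_sum fun G _ => ?_
  have hw := graphWeight_nonneg h0 h1 G
  by_cases hS : G ∈ S <;> by_cases hT : G ∈ T <;> simp [hS, hT] <;> linarith

include h0 h1 in
lemma graphProb_biUnion_le {ι : Type*} (s : Finset ι) (E : ι → Set (SimpleGraph (Fin N))) :
    graphProb pE (⋃ i ∈ s, E i) ≤ ∑ i ∈ s, graphProb pE (E i) := by
  classical
  induction s using Finset.induction with
  | empty => simp [graphProb]
  | insert x s' hi ih =>
    rw [Finset.sum_insert hi, Finset.set_biUnion_insert]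
    exact le_trans (graphProb_union_le h0 h1 _ _) (by linarith)

include h0 h1 in
lemma graphProb_noEdge_le (F : Finset (Fin N × Fin N)) (hF : F ⊆ pairs N) :
    graphProb pE {G | ∀ q ∈ F, ¬ G.Adj q.1 q.2} ≤ ∏ q ∈ F, (1 - pE q.1 q.2) := by
  set w : Fin N × Fin N → Bool → ℝ := fun q b =>
    (if b = true then pE q.1 q.2 else 1 - pE q.1 q.2) * (if q ∈ F ∧ b = true then 0 else 1)
    with hw
  have key := sum_graphs_prod (N := N) w
  have step1 : graphProb pE {G | ∀ q ∈ F, ¬ G.Adj q.1 q.2} ≤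
      ∑ G : SimpleGraph (Fin N), ∏ q ∈ pairs N, w q (decide (G.Adj q.1 q.2)) := by
    refine Finset.sum_le_sum fun G _ => ?_
    by_cases hG : G ∈ {G : SimpleGraph (Fin N) | ∀ q ∈ F, ¬ G.Adj q.1 q.2}
    · simp only [hG, if_true]
      rw [graphWeight_eq_prod]
      refine le_of_eq (Finset.prod_congr rfl fun q hq => ?_)
      by_cases hadj : G.Adj q.1 q.2
      · have : q ∉ F := fun hqF => hG q hqF hadj
        simp [hw, hadj, this]
      · simp [hw, hadj]
    · simp only [hG, if_false]
      refine Finset.prod_nonneg fun q _ => ?_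
      simp only [hw]
      have h0' := h0 q.1 q.2
      have h1' := h1 q.1 q.2
      by_cases hadj : G.Adj q.1 q.2 <;> by_cases hqF : q ∈ F <;>
        simp [hadj, hqF] <;> linarith
  refine le_trans step1 (le_of_eq ?_)
  rw [key]
  have heq : ∀ q ∈ pairs N, w q true + w q false = if q ∈ F then 1 - pE q.1 q.2 else 1 := by
    intro q _
    by_cases hqF : q ∈ F <;> simp [hw, hqF] <;> ring
  rw [Finset.prod_congr rfl heq, Finset.prod_ite_mem, Finset.inter_eq_right.mpr hF]
end probs

lemma sum_cutpairs {N : ℕ} (pE : Fin N → Fin N → ℝ) (hsym : ∀ v w, pE v w = pE w v)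
    (S T : Finset (Fin N)) (hdisj : Disjoint S T) :
    ∑ q ∈ (S ×ˢ T ∪ T ×ˢ S).filter (fun q => q.1 < q.2), pE q.1 q.2 =
      ∑ v ∈ S, ∑ w ∈ T, pE v w := by
  rw [Finset.filter_union]
  have hdisjU : Disjoint ((S ×ˢ T).filter (fun q => q.1 < q.2))
      ((T ×ˢ S).filter (fun q => q.1 < q.2)) := by
    rw [Finset.disjoint_left]
    intro q hq1 hq2
    simp only [Finset.mem_filter, Finset.mem_product] at hq1 hq2
    exact (Finset.disjoint_left.mp hdisj) hq1.1.1 hq2.1.1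
  rw [Finset.sum_union hdisjU]
  have hswap : ∑ q ∈ (T ×ˢ S).filter (fun q => q.1 < q.2), pE q.1 q.2 =
      ∑ q ∈ (S ×ˢ T).filter (fun q => ¬ q.1 < q.2), pE q.1 q.2 := by
    refine Finset.sum_nbij' Prod.swap Prod.swap ?_ ?_ ?_ ?_ ?_
    · intro q hq
      simp only [Finset.mem_filter, Finset.mem_product] at hq ⊢
      exact ⟨⟨hq.1.2, hq.1.1⟩, by simpa using asymm hq.2⟩
    · intro q hq
      simp only [Finset.mem_filter, Finset.mem_product] at hq ⊢
      have hne : q.1 ≠ q.2 := fun h =>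
        (Finset.disjoint_left.mp hdisj) (h ▸ hq.1.1) hq.1.2
      refine ⟨⟨hq.1.2, hq.1.1⟩, ?_⟩
      simp only [Prod.fst_swap, Prod.snd_swap]
      rcases lt_or_gt_of_ne hne with h | h
      · exact absurd h hq.2
      · exact h
    · intro q _; simp
    · intro q _; simp
    · intro q _
      simp only [Prod.fst_swap, Prod.snd_swap]
      exact hsym q.1 q.2
  rw [hswap, Finset.sum_filter_add_sum_filter_not, Finset.sum_product]

section probs2
variable {N : ℕ} {pE : Fin N → Fin N → ℝ} (h0 : ∀ v w, 0 ≤ pE v w) (h1 : ∀ v w, pE v w ≤ 1)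

include h0 h1 in
lemma graphProb_noAdj_le (hsym : ∀ v w, pE v w = pE w v) (S T : Finset (Fin N))
    (hdisj : Disjoint S T) :
    graphProb pE {G | ∀ v ∈ S, ∀ w ∈ T, ¬ G.Adj v w} ≤
      Real.exp (- ∑ v ∈ S, ∑ w ∈ T, pE v w) := by
  set F : Finset (Fin N × Fin N) := (S ×ˢ T ∪ T ×ˢ S).filter (fun q => q.1 < q.2) with hF
  have hFsub : F ⊆ pairs N := by
    intro q hq
    simp only [hF, Finset.mem_filter] at hq
    simp [pairs, hq.2]
  have hevent : {G : SimpleGraph (Fin N) | ∀ v ∈ S, ∀ w ∈ T, ¬ G.Adj v w} ⊆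
      {G | ∀ q ∈ F, ¬ G.Adj q.1 q.2} := by
    intro G hG q hq
    simp only [hF, Finset.mem_filter, Finset.mem_union, Finset.mem_product] at hq
    rcases hq.1 with ⟨h1', h2'⟩ | ⟨h1', h2'⟩
    · exact hG q.1 h1' q.2 h2'
    · intro hadj; exact hG q.2 h2' q.1 h1' hadj.symm
  refine le_trans (graphProb_mono h0 h1 hevent)
    (le_trans (graphProb_noEdge_le h0 h1 F hFsub) ?_)
  have hprod : ∏ q ∈ F, (1 - pE q.1 q.2) ≤ ∏ q ∈ F, Real.exp (-(pE q.1 q.2)) :=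
    Finset.prod_le_prod (fun q _ => by linarith [h1 q.1 q.2]) (fun q _ => by
      have := Real.add_one_le_exp (-(pE q.1 q.2)); linarith)
  refine le_trans hprod (le_of_eq ?_)
  rw [← Real.exp_sum]
  congr 1
  rw [← sum_cutpairs pE hsym S T hdisj, ← Finset.sum_neg_distrib]

end probs2

lemma sum_comp_typ {V' T' : Type*} [Fintype T'] [DecidableEq T'] [DecidableEq V']
    (S : Finset V') (typ : V' → T') (g : T' → ℝ) :
    ∑ v ∈ S, g (typ v) = ∑ s : T', ((S.filter (fun v => typ v = s)).card : ℝ) * g s := by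
  rw [← Finset.sum_fiberwise S typ (fun v => g (typ v))]
  refine Finset.sum_congr rfl fun s _ => ?_
  have : ∑ v ∈ S.filter (fun v => typ v = s), g (typ v)
      = ∑ v ∈ S.filter (fun v => typ v = s), g s :=
    Finset.sum_congr rfl fun v hv => by rw [(Finset.mem_filter.mp hv).2]
  rw [this, Finset.sum_const, nsmul_eq_mul]

lemma sum_powerset_pow {V' : Type*} [DecidableEq V'] (M : Finset V') (x : ℝ) :
    ∑ S ∈ M.powerset, x ^ S.card = (x + 1) ^ M.card := by
  rw [Finset.sum_powerset, add_pow]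
  refine Finset.sum_congr rfl fun t ht => ?_
  have : ∑ S ∈ Finset.powersetCard t M, x ^ S.card
      = ∑ S ∈ Finset.powersetCard t M, x ^ t :=
    Finset.sum_congr rfl fun S hS => by rw [(Finset.mem_powersetCard.mp hS).2]
  rw [this, Finset.sum_const, nsmul_eq_mul, Finset.card_powersetCard]
  rw [one_pow, mul_one, mul_comm]

/-- within-block subgraph -/
def inGraph {V : Type*} {r : ℕ} (B : V → Fin r) (G : SimpleGraph V) : SimpleGraph V where
  Adj v w := G.Adj v w ∧ B v = B w
  symm := ⟨fun v w ⟨h1, h2⟩ => ⟨h1.symm, h2.symm⟩⟩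
  loopless := ⟨fun v h => G.loopless.irrefl v h.1⟩

lemma inGraph_le {V : Type*} {r : ℕ} (B : V → Fin r) (G : SimpleGraph V) :
    inGraph B G ≤ G := fun _ _ h => h.1

lemma badCut_of_not_blockReach {V : Type*} [Fintype V] [DecidableEq V] {r : ℕ} (B : V → Fin r)
    (G : SimpleGraph V)
    (h : ¬ ∀ v w, B v = B w → (inGraph B G).Reachable v w) :
    ∃ i, ∃ S : Finset V, S.Nonempty ∧ S ⊂ Finset.univ.filter (fun v => B v = i) ∧
      (∀ v ∈ S, ∀ w ∈ Finset.univ.filter (fun v => B v = i) \ S, ¬ G.Adj v w) := by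
  push_neg at h
  obtain ⟨v, w, hbvw, hnr⟩ := h
  refine ⟨B v, (Finset.univ.filter (fun u => B u = B v)).filter
    (fun u => (inGraph B G).Reachable v u), ⟨v, ?_⟩, ?_, ?_⟩
  · simp [SimpleGraph.Reachable.refl]
  · constructor
    · intro u hu
      simp only [Finset.mem_filter] at hu ⊢
      exact ⟨hu.1.1, hu.1.2⟩
    · intro hsub
      have hw : w ∈ Finset.univ.filter (fun u => B u = B v) := by simp [hbvw.symm]
      have := hsub hw
      simp only [Finset.mem_filter] at this
      exact hnr this.2
  · intro u hu u' hu' hadj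
    simp only [Finset.mem_sdiff, Finset.mem_filter] at hu hu'
    exact hu'.2 ⟨hu'.1, hu.2.trans (SimpleGraph.Adj.reachable ⟨hadj, hu.1.2.trans hu'.1.2.symm⟩)⟩

lemma connected_of_blocks {V : Type*} {r : ℕ} (B : V → Fin r)
    (G : SimpleGraph V) (H : SimpleGraph (Fin r)) (hH : H.Connected)
    (hne : ∀ i, ∃ v, B v = i) (hr : 0 < r)
    (h1 : ∀ v w, B v = B w → (inGraph B G).Reachable v w)
    (h2 : ∀ i j, H.Adj i j → ∃ v w, B v = i ∧ B w = j ∧ G.Adj v w) :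
    G.Connected := by
  have hV : Nonempty V := by
    obtain ⟨v, _⟩ := hne ⟨0, hr⟩
    exact ⟨v⟩
  have reach : ∀ i j : Fin r, H.Reachable i j →
      ∀ v w, B v = i → B w = j → G.Reachable v w := by
    intro i j hij
    obtain ⟨walk⟩ := hij
    induction walk with
    | nil =>
      intro v w hv hw
      exact (h1 v w (hv.trans hw.symm)).mono (inGraph_le B G)
    | @cons i b j hadj p ih =>
      intro v w hv hw
      obtain ⟨v₁, w₁, hb1, hb2, hvw⟩ := h2 i b hadj
      have r1 : G.Reachable v v₁ :=
        (h1 v v₁ (by rw [hv, hb1])).mono (inGraph_le B G)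
      exact (r1.trans hvw.reachable).trans (ih w₁ w hb2 hw)
  refine ⟨fun v w => ?_⟩
  exact reach (B v) (B w) (hH.preconnected (B v) (B w)) v w rfl rfl

lemma claimC {m : ℕ} (a : Fin m → ℝ) (ha : ∀ k, 0 < a k)
    (c : Fin m → Fin m → ℝ) (hcs : ∀ k l, c k l = c l k) (hcn : ∀ k l, 0 ≤ c k l)
    (hconn : (SimpleGraph.fromRel (fun k l : Fin m => 0 < c k l)).Connected)
    (hpos : ∀ k, ∃ l, 0 < c k l)
    (ε : ℝ) (hε : 0 < ε) :
    ∃ η > 0, ∀ x : Fin m → ℝ, (∀ k, 0 ≤ x k) → (∀ k, x k ≤ a k) →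
      ε ≤ ∑ k, x k → ε ≤ ∑ k, (a k - x k) →
      η ≤ ∑ k, ∑ l, c k l * x k * (a l - x l) := by
  set Q : (Fin m → ℝ) → ℝ := fun x => ∑ k, ∑ l, c k l * x k * (a l - x l) with hQ
  set K : Set (Fin m → ℝ) := (Set.pi Set.univ (fun k => Set.Icc 0 (a k))) ∩
    ((fun x : Fin m → ℝ => ∑ k, x k) ⁻¹' Set.Icc ε ((∑ k, a k) - ε)) with hK
  have hmemK : ∀ x : Fin m → ℝ, (∀ k, 0 ≤ x k) → (∀ k, x k ≤ a k) →
      ε ≤ ∑ k, x k → ε ≤ ∑ k, (a k - x k) → x ∈ K := by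
    intro x h1 h2 h3 h4
    rw [Finset.sum_sub_distrib] at h4
    exact ⟨fun k _ => ⟨h1 k, h2 k⟩, ⟨h3, by linarith⟩⟩
  have hQpos : ∀ x ∈ K, 0 < Q x := by
    rintro x ⟨hx1, hx2⟩
    simp only [Set.mem_pi, Set.mem_univ, forall_true_left, Set.mem_Icc] at hx1
    obtain ⟨hs1, hs2⟩ := hx2
    have hterm : ∀ k l, 0 ≤ c k l * x k * (a l - x l) := fun k l =>
      mul_nonneg (mul_nonneg (hcn k l) (hx1 k).1) (by linarith [(hx1 l).2])
    have hQnn : 0 ≤ Q x :=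
      Finset.sum_nonneg fun k _ => Finset.sum_nonneg fun l _ => hterm k l
    rcases hQnn.lt_or_eq with h | h
    · exact h
    exfalso
    have hzero : ∀ k l, c k l * x k * (a l - x l) = 0 := by
      have h1 : ∀ k ∈ Finset.univ, (0:ℝ) = ∑ l, c k l * x k * (a l - x l) → True := fun _ _ _ => trivial
      have hrows : ∀ k ∈ (Finset.univ : Finset (Fin m)), ∑ l, c k l * x k * (a l - x l) = 0 := by
        have := (Finset.sum_eq_zero_iff_of_nonneg (fun k _ =>
          Finset.sum_nonneg fun l _ => hterm k l)).mp h.symm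
        exact this
      intro k l
      exact (Finset.sum_eq_zero_iff_of_nonneg (fun l _ => hterm k l)).mp (hrows k (by simp)) l
        (by simp)
    have hstep : ∀ k l, 0 < c k l → 0 < x k → x l = a l := by
      intro k l hc hx
      have := hzero k l
      rcases mul_eq_zero.mp this with h' | h'
      · rcases mul_eq_zero.mp h' with h'' | h''
        · exact absurd h'' hc.ne'
        · exact absurd h'' hx.ne'
      · linarith
    have hk0 : ∃ k, 0 < x k := by
      by_contra hno
      push_neg at hno
      have : ∀ k, x k = 0 := fun k => le_antisymm (hno k) (hx1 k).1
      have : (∑ k, x k) = 0 := Finset.sum_eq_zero fun k _ => this k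
      linarith
    obtain ⟨k₀, hk₀⟩ := hk0
    obtain ⟨l₀, hl₀c⟩ := hpos k₀
    have hl₀ : x l₀ = a l₀ := hstep k₀ l₀ hl₀c hk₀
    have key : ∀ (u v : Fin m)
        (_ : (SimpleGraph.fromRel (fun k l : Fin m => 0 < c k l)).Walk u v),
        x u = a u → x v = a v := by
      intro u v w
      induction w with
      | nil => exact fun h => h
      | @cons u b v hadj p ih =>
        intro hu
        refine ih ?_
        have hc : 0 < c u b := by
          rcases hadj.2 with h' | h'
          · exact h'
          · rw [hcs]; exact h'
        exact hstep u b hc (hu ▸ ha u)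
    have hall : ∀ v, x v = a v := by
      intro v
      obtain ⟨w⟩ := hconn.preconnected l₀ v
      exact key l₀ v w hl₀
    have : (∑ k, (a k - x k)) = 0 := Finset.sum_eq_zero fun k _ => by rw [hall k]; ring
    rw [Finset.sum_sub_distrib] at this
    linarith
  have hKcompact : IsCompact K :=
    IsCompact.inter_right (isCompact_univ_pi fun k => isCompact_Icc)
      (IsClosed.preimage (by fun_prop) isClosed_Icc)
  have hQcont : Continuous Q := by fun_prop
  by_cases hKne : K.Nonempty
  · obtain ⟨x₀, hx₀K, hmin⟩ := hKcompact.exists_isMinOn hKne hQcont.continuousOn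
    refine ⟨Q x₀, hQpos x₀ hx₀K, ?_⟩
    intro x h1 h2 h3 h4
    exact hmin (hmemK x h1 h2 h3 h4)
  · refine ⟨1, one_pos, ?_⟩
    intro x h1 h2 h3 h4
    exact absurd ⟨x, hmemK x h1 h2 h3 h4⟩ hKne

lemma fin_cast_self {n : ℕ} (h : n = n) (x : Fin n) : Fin.cast h x = x :=
  Fin.ext (Fin.coe_cast h x)

section model
variable {r : ℕ} {mi : Fin r → ℕ}
  (cmat : ∀ i, Fin (mi i) → Fin (mi i) → ℝ)
  (d : ((i : Fin r) × Fin (mi i)) → ((i : Fin r) × Fin (mi i)) → ℝ)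
  (p p' : ℝ)

lemma blockEdgeP_same (i : Fin r) (k l : Fin (mi i)) :
    blockEdgeP cmat d p p' ⟨i, k⟩ ⟨i, l⟩ = min (cmat i k l * p) 1 := by
  rw [blockEdgeP, dif_pos rfl]
  norm_num [fin_cast_self]

lemma blockEdgeP_diff {i j : Fin r} (h : i ≠ j) (k : Fin (mi i)) (l : Fin (mi j)) :
    blockEdgeP cmat d p p' ⟨i, k⟩ ⟨j, l⟩ = min (d ⟨i, k⟩ ⟨j, l⟩ * p') 1 := by
  rw [blockEdgeP, dif_neg]
  exact h

lemma blockEdgeP_nonneg (hcnn : ∀ i k l, 0 ≤ cmat i k l) (hdnn : ∀ s t, 0 ≤ d s t)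
    (hp : 0 ≤ p) (hp' : 0 ≤ p') (s t : (i : Fin r) × Fin (mi i)) :
    0 ≤ blockEdgeP cmat d p p' s t := by
  rw [blockEdgeP]
  split
  · exact le_min (mul_nonneg (hcnn _ _ _) hp) zero_le_one
  · exact le_min (mul_nonneg (hdnn _ _) hp') zero_le_one

lemma blockEdgeP_le_one (s t : (i : Fin r) × Fin (mi i)) :
    blockEdgeP cmat d p p' s t ≤ 1 := by
  rw [blockEdgeP]
  split <;> exact min_le_right _ _

lemma blockEdgeP_symm (hcsymm : ∀ i k l, cmat i k l = cmat i l k)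
    (hdsymm : ∀ s t, d s t = d t s) (s t : (i : Fin r) × Fin (mi i)) :
    blockEdgeP cmat d p p' s t = blockEdgeP cmat d p p' t s := by
  obtain ⟨i, k⟩ := s
  obtain ⟨j, l⟩ := t
  by_cases h : i = j
  · subst h
    rw [blockEdgeP_same, blockEdgeP_same, hcsymm]
  · rw [blockEdgeP_diff cmat d p p' h, blockEdgeP_diff cmat d p p' (Ne.symm h), hdsymm]

end model

section perN
variable {r : ℕ} {mi : Fin r → ℕ} {N : ℕ → ℕ}
  (typ : ∀ n, Fin (N n) → (i : Fin r) × Fin (mi i))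
  (d : ((i : Fin r) × Fin (mi i)) → ((i : Fin r) × Fin (mi i)) → ℝ)

noncomputable def blockFD (n : ℕ) (i : Fin r) : Finset (Fin (N n)) :=
  Finset.univ.filter (fun v => (typ n v).1 = i)

def E1D (n : ℕ) (p : Fin r × Finset (Fin (N n))) : Set (SimpleGraph (Fin (N n))) :=
  {G | ∀ v ∈ p.2, ∀ w ∈ blockFD typ n p.1 \ p.2, ¬ G.Adj v w}

def E2D (n : ℕ) (p : Fin r × Fin r) : Set (SimpleGraph (Fin (N n))) :=
  {G | ∀ v ∈ blockFD typ n p.1, ∀ w ∈ blockFD typ n p.2, ¬ G.Adj v w}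

noncomputable def badIdxD (n : ℕ) : Finset (Fin r × Finset (Fin (N n))) :=
  Finset.univ.filter (fun p => p.2.Nonempty ∧ p.2 ⊆ blockFD typ n p.1 ∧
    2 * p.2.card ≤ (blockFD typ n p.1).card)

noncomputable def crossIdxD : Finset (Fin r × Fin r) :=
  Finset.univ.filter (fun p =>
    (SimpleGraph.fromRel (fun i j : Fin r => ∃ k l, 0 < d ⟨i, k⟩ ⟨j, l⟩)).Adj p.1 p.2)

lemma not_connected_subset (hr : 0 < r)
    (hblk : (SimpleGraph.fromRel
      (fun i j : Fin r => ∃ k l, 0 < d ⟨i, k⟩ ⟨j, l⟩)).Connected)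
    (n : ℕ) (hbne : ∀ i : Fin r, ∃ v : Fin (N n), (typ n v).1 = i) :
    {G : SimpleGraph (Fin (N n)) | ¬ G.Connected} ⊆
      (⋃ p ∈ badIdxD typ n, E1D typ n p) ∪ (⋃ p ∈ crossIdxD d, E2D typ n p) := by
  intro G hG
  have hB : ∀ i : Fin r, Finset.univ.filter (fun v => (typ n v).1 = i) = blockFD typ n i :=
    fun i => rfl
  by_cases hblocks : ∀ v w : Fin (N n),
      (typ n v).1 = (typ n w).1 → (inGraph (fun v => (typ n v).1) G).Reachable v w
  · by_cases hcross : ∀ i j, (SimpleGraph.fromRel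
        (fun i j : Fin r => ∃ k l, 0 < d ⟨i, k⟩ ⟨j, l⟩)).Adj i j →
        ∃ v w, (typ n v).1 = i ∧ (typ n w).1 = j ∧ G.Adj v w
    · exact absurd (connected_of_blocks (fun v => (typ n v).1) G _ hblk hbne hr
        hblocks hcross) hG
    · push_neg at hcross
      obtain ⟨i, j, hadj, hno⟩ := hcross
      refine Or.inr (Set.mem_biUnion
        (Finset.mem_filter.mpr ⟨Finset.mem_univ ((i, j) : Fin r × Fin r), hadj⟩) ?_)
      simp only [E2D, Set.mem_setOf_eq]
      intro v hv w hw hvw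
      simp only [blockFD, Finset.mem_filter] at hv hw
      exact hno v w hv.2 hw.2 hvw
  · obtain ⟨i, S, hSne, hSsub, hSno⟩ :=
      badCut_of_not_blockReach (fun v => (typ n v).1) G hblocks
    rw [hB] at hSsub hSno
    by_cases hhalf : 2 * S.card ≤ (blockFD typ n i).card
    · refine Or.inl (Set.mem_biUnion (show (i, S) ∈ badIdxD typ n by
        simp only [badIdxD, Finset.mem_filter, Finset.mem_univ, true_and]
        exact ⟨hSne, hSsub.subset, hhalf⟩) ?_)
      simp only [E1D, Set.mem_setOf_eq]
      exact hSno
    · have hS'card : (blockFD typ n i \ S).card = (blockFD typ n i).card - S.card :=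
        Finset.card_sdiff_of_subset hSsub.subset
      have hSlt : S.card < (blockFD typ n i).card := Finset.card_lt_card hSsub
      have hS'ne : (blockFD typ n i \ S).Nonempty := by
        rw [← Finset.card_pos, hS'card]
        omega
      have hS'half : 2 * (blockFD typ n i \ S).card ≤ (blockFD typ n i).card := by
        rw [hS'card]
        omega
      refine Or.inl (Set.mem_biUnion
        (show (i, blockFD typ n i \ S) ∈ badIdxD typ n by
          simp only [badIdxD, Finset.mem_filter, Finset.mem_univ, true_and]
          exact ⟨hS'ne, Finset.sdiff_subset, hS'half⟩) ?_)
      simp only [E1D, Set.mem_setOf_eq]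
      intro v hv w hw hvw
      have hwS : w ∈ S := by
        rwa [Finset.sdiff_sdiff_self_left,
          Finset.inter_eq_right.mpr hSsub.subset] at hw
      exact hSno w hwS v hv hvw.symm

end perN

section counting
variable {r : ℕ} {mi : Fin r → ℕ} {N : ℕ → ℕ}
  (typ : ∀ n, Fin (N n) → (i : Fin r) × Fin (mi i))

lemma filter_typ_vanish (n : ℕ) (S : Finset (Fin (N n))) (i : Fin r)
    (hS : ∀ v ∈ S, (typ n v).1 = i) (s : (i : Fin r) × Fin (mi i)) (hs : s.1 ≠ i) :
    (S.filter (fun v => typ n v = s)).card = 0 := by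
  rw [Finset.card_eq_zero, Finset.filter_eq_empty_iff]
  intro v hv heq
  exact hs (heq ▸ hS v hv)

lemma sum_by_type (n : ℕ) (S : Finset (Fin (N n))) (i : Fin r)
    (hS : ∀ v ∈ S, (typ n v).1 = i) (g : ((i : Fin r) × Fin (mi i)) → ℝ) :
    ∑ v ∈ S, g (typ n v) =
      ∑ k : Fin (mi i), ((S.filter (fun v => typ n v = ⟨i, k⟩)).card : ℝ) * g ⟨i, k⟩ := by
  rw [sum_comp_typ S (typ n) g]
  rw [← Finset.univ_sigma_univ, Finset.sum_sigma]
  rw [Finset.sum_eq_single i]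
  · intro j _ hji
    refine Finset.sum_eq_zero fun k _ => ?_
    rw [filter_typ_vanish typ n S i hS ⟨j, k⟩ hji]
    norm_num
  · intro h
    exact absurd (Finset.mem_univ i) h

lemma sum_pairs_by_type (n : ℕ) (S T' : Finset (Fin (N n))) (i j : Fin r)
    (hS : ∀ v ∈ S, (typ n v).1 = i) (hT : ∀ w ∈ T', (typ n w).1 = j)
    (f : ((i : Fin r) × Fin (mi i)) → ((i : Fin r) × Fin (mi i)) → ℝ) :
    ∑ v ∈ S, ∑ w ∈ T', f (typ n v) (typ n w) =
      ∑ k : Fin (mi i), ∑ l : Fin (mi j),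
        ((S.filter (fun v => typ n v = ⟨i, k⟩)).card : ℝ) *
        ((T'.filter (fun w => typ n w = ⟨j, l⟩)).card : ℝ) * f ⟨i, k⟩ ⟨j, l⟩ := by
  rw [sum_by_type typ n S i hS (fun s => ∑ w ∈ T', f s (typ n w))]
  refine Finset.sum_congr rfl fun k _ => ?_
  rw [sum_by_type typ n T' j hT (fun t => f ⟨i, k⟩ t), Finset.mul_sum]
  refine Finset.sum_congr rfl fun l _ => by ring

lemma card_by_type (n : ℕ) (S : Finset (Fin (N n))) (i : Fin r)
    (hS : ∀ v ∈ S, (typ n v).1 = i) :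
    (S.card : ℝ) = ∑ k : Fin (mi i), ((S.filter (fun v => typ n v = ⟨i, k⟩)).card : ℝ) := by
  have := sum_by_type typ n S i hS (fun _ => (1 : ℝ))
  simp only [mul_one] at this
  rw [← this, Finset.sum_const, nsmul_eq_mul, mul_one]

end counting

section pEsec
variable {r : ℕ} {mi : Fin r → ℕ} {N : ℕ → ℕ}
  (typ : ∀ n, Fin (N n) → (i : Fin r) × Fin (mi i))
  (cmat : ∀ i, Fin (mi i) → Fin (mi i) → ℝ)
  (d : ((i : Fin r) × Fin (mi i)) → ((i : Fin r) × Fin (mi i)) → ℝ)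
  (α : ℝ) (p' : ℕ → ℝ)

noncomputable def pED (n : ℕ) : Fin (N n) → Fin (N n) → ℝ :=
  fun v w => blockEdgeP cmat d (α * Real.log n / n) (p' n) (typ n v) (typ n w)

variable (hcnn : ∀ i k l, 0 ≤ cmat i k l) (hdnn : ∀ s t, 0 ≤ d s t)
  (hcsymm : ∀ i k l, cmat i k l = cmat i l k) (hdsymm : ∀ s t, d s t = d t s)
  (hα : 0 < α) (hp'nn : ∀ n, 0 ≤ p' n)

lemma pfun_nonneg (hα0 : 0 ≤ α) (n : ℕ) : 0 ≤ α * Real.log n / n := by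
  rcases Nat.eq_zero_or_pos n with h | h
  · simp [h]
  · have h1 : (1 : ℝ) ≤ n := by exact_mod_cast h
    have hl : 0 ≤ Real.log n := Real.log_nonneg h1
    have hn : (0 : ℝ) < n := by exact_mod_cast h
    positivity

include hcnn hdnn hα hp'nn in
lemma pED_nonneg (n : ℕ) : ∀ v w, 0 ≤ pED typ cmat d α p' n v w := fun v w =>
  blockEdgeP_nonneg cmat d _ _ hcnn hdnn (pfun_nonneg α hα.le n) (hp'nn n) _ _

lemma pED_le_one (n : ℕ) : ∀ v w, pED typ cmat d α p' n v w ≤ 1 := fun v w =>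
  blockEdgeP_le_one cmat d _ _ _ _

include hcsymm hdsymm in
lemma pED_symm (n : ℕ) : ∀ v w, pED typ cmat d α p' n v w = pED typ cmat d α p' n w v :=
  fun v w => blockEdgeP_symm cmat d _ _ hcsymm hdsymm _ _

include hcnn hdnn hα hp'nn in
lemma prob_not_connected_le (hr : 0 < r)
    (hblk : (SimpleGraph.fromRel
      (fun i j : Fin r => ∃ k l, 0 < d ⟨i, k⟩ ⟨j, l⟩)).Connected)
    (n : ℕ) (hbne : ∀ i : Fin r, ∃ v : Fin (N n), (typ n v).1 = i) :
    graphProb (pED typ cmat d α p' n) {G | ¬ G.Connected} ≤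
      (∑ p ∈ badIdxD typ n, graphProb (pED typ cmat d α p' n) (E1D typ n p)) +
      ∑ p ∈ crossIdxD d, graphProb (pED typ cmat d α p' n) (E2D typ n p) := by
  have h0 := pED_nonneg typ cmat d α p' hcnn hdnn hα hp'nn n
  have h1 := pED_le_one typ cmat d α p' n
  refine le_trans (graphProb_mono h0 h1 (not_connected_subset typ d hr hblk n hbne)) ?_
  refine le_trans (graphProb_union_le h0 h1 _ _) ?_
  exact add_le_add (graphProb_biUnion_le h0 h1 _ _) (graphProb_biUnion_le h0 h1 _ _)

end pEsec

lemma algebra_small {m : ℕ} (a : Fin m → ℝ) (c : Fin m → Fin m → ℝ)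
    (α cm δ ε nR t : ℝ) (sk tk : Fin m → ℝ) (hαpos : 0 < α)
    (hsknn : ∀ k, 0 ≤ sk k) (htc : ∀ l, tk l = a l * nR - sk l)
    (hskcard : ∑ k, sk k = t) (hcmb : ∀ k l, c k l ≤ cm)
    (hb : ∀ k, 1 + 2 * δ ≤ α * ∑ l, a l * c k l)
    (hεδ : α * cm * ε ≤ δ) (hcm1 : 1 ≤ cm)
    (hsmall : t ≤ ε * nR) (hn0 : 0 < nR) (hε0 : 0 < ε) :
    (1 + δ) / α * nR * t ≤ ∑ k, ∑ l, c k l * sk k * tk l := by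
  have ht0 : 0 ≤ t := hskcard ▸ Finset.sum_nonneg fun k _ => hsknn k
  have hcm0 : 0 < cm := lt_of_lt_of_le one_pos hcm1
  have hrow : ∀ k : Fin m, (1 + δ) / α * nR * sk k ≤ ∑ l, c k l * sk k * tk l := by
    intro k
    have h₁ : ∑ l, c k l * sk k * tk l = sk k * ∑ l, c k l * tk l := by
      rw [Finset.mul_sum]
      exact Finset.sum_congr rfl fun l _ => by ring
    have e1 : (∑ l, c k l * (a l * nR)) = (∑ l, a l * c k l) * nR := by
      rw [Finset.sum_mul]
      exact Finset.sum_congr rfl fun l _ => by ring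
    have e2 : ∑ l, c k l * sk l ≤ cm * t := by
      rw [← hskcard, Finset.mul_sum]
      exact Finset.sum_le_sum fun l _ => mul_le_mul_of_nonneg_right (hcmb k l) (hsknn l)
    have h₂ : (∑ l, a l * c k l) * nR - cm * t ≤ ∑ l, c k l * tk l := by
      have : ∑ l, c k l * tk l = (∑ l, c k l * (a l * nR)) - ∑ l, c k l * sk l := by
        rw [← Finset.sum_sub_distrib]
        exact Finset.sum_congr rfl fun l _ => by rw [htc l]; ring
      rw [this, e1]
      linarith
    have h₃ : (1 + δ) / α * nR ≤ (∑ l, a l * c k l) * nR - cm * t := by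
      have hB : (1 + 2 * δ) / α ≤ ∑ l, a l * c k l := by
        rw [div_le_iff₀ hαpos]
        linarith [hb k, mul_comm α (∑ l, a l * c k l)]
      have hεα : cm * ε ≤ δ / α := by
        rw [le_div_iff₀ hαpos]
        nlinarith [hεδ]
      have h4 : cm * t ≤ cm * (ε * nR) := mul_le_mul_of_nonneg_left hsmall hcm0.le
      have h5 : cm * (ε * nR) ≤ δ / α * nR := by
        have := mul_le_mul_of_nonneg_right hεα hn0.le
        nlinarith
      have h6 : (1 + 2 * δ) / α * nR ≤ (∑ l, a l * c k l) * nR :=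
        mul_le_mul_of_nonneg_right hB hn0.le
      have h7 : (1 + δ) / α * nR + δ / α * nR = (1 + 2 * δ) / α * nR := by
        field_simp
        ring
      linarith
    rw [h₁]
    calc (1 + δ) / α * nR * sk k = sk k * ((1 + δ) / α * nR) := by ring
      _ ≤ sk k * ∑ l, c k l * tk l :=
        mul_le_mul_of_nonneg_left (le_trans h₃ h₂) (hsknn k)
  calc (1 + δ) / α * nR * t = ∑ k, (1 + δ) / α * nR * sk k := by
        rw [← Finset.mul_sum, hskcard]
    _ ≤ ∑ k, ∑ l, c k l * sk k * tk l := Finset.sum_le_sum fun k _ => hrow k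

lemma algebra_large {m : ℕ} (a : Fin m → ℝ) (c : Fin m → Fin m → ℝ)
    (ε ηm nR t : ℝ) (sk tk : Fin m → ℝ)
    (hsknn : ∀ k, 0 ≤ sk k) (htc : ∀ l, tk l = a l * nR - sk l)
    (hsk_le : ∀ k, sk k ≤ a k * nR)
    (hskcard : ∑ k, sk k = t)
    (hηq : ∀ x : Fin m → ℝ, (∀ k, 0 ≤ x k) → (∀ k, x k ≤ a k) →
      ε ≤ ∑ k, x k → ε ≤ ∑ k, (a k - x k) →
      ηm ≤ ∑ k, ∑ l, c k l * x k * (a l - x l))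
    (hn0 : 0 < nR)
    (hbig : ε * nR ≤ t) (hhalf2 : 2 * t ≤ (∑ l, a l) * nR) (hεA : ε ≤ (∑ l, a l) / 2) :
    ηm * nR ^ 2 ≤ ∑ k, ∑ l, c k l * sk k * tk l := by
  have hx0 : ∀ k, 0 ≤ sk k / nR := fun k => div_nonneg (hsknn k) hn0.le
  have hx1 : ∀ k, sk k / nR ≤ a k := fun k => by
    rw [div_le_iff₀ hn0]
    exact hsk_le k
  have hxs : ε ≤ ∑ k, sk k / nR := by
    rw [← Finset.sum_div, hskcard, le_div_iff₀ hn0]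
    linarith
  have hxt : ε ≤ ∑ k, (a k - sk k / nR) := by
    rw [Finset.sum_sub_distrib, ← Finset.sum_div, hskcard]
    have h1 : t / nR ≤ (∑ l, a l) / 2 := by
      rw [div_le_div_iff₀ hn0 two_pos]
      linarith
    linarith
  have hkey := hηq (fun k => sk k / nR) hx0 hx1 hxs hxt
  have hid : ∑ k, ∑ l, c k l * (sk k / nR) * (a l - sk l / nR) =
      (∑ k, ∑ l, c k l * sk k * tk l) / nR ^ 2 := by
    rw [Finset.sum_div]
    refine Finset.sum_congr rfl fun k _ => ?_
    rw [Finset.sum_div]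
    refine Finset.sum_congr rfl fun l _ => ?_
    show c k l * (sk k / nR) * (a l - sk l / nR) = c k l * sk k * tk l / nR ^ 2
    have h2 : (a l - sk l / nR) = (a l * nR - sk l) / nR := by
      rw [sub_div, mul_div_cancel_right₀ _ hn0.ne']
    rw [htc l, h2]
    ring
  rw [hid] at hkey
  rw [le_div_iff₀ (by positivity)] at hkey
  linarith [hkey]

lemma E1_bound {r : ℕ} {mi : Fin r → ℕ} {N : ℕ → ℕ}
    (typ : ∀ n, Fin (N n) → (i : Fin r) × Fin (mi i))
    (a : ∀ i, Fin (mi i) → ℝ)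
    (cmat : ∀ i, Fin (mi i) → Fin (mi i) → ℝ)
    (d : ((i : Fin r) × Fin (mi i)) → ((i : Fin r) × Fin (mi i)) → ℝ)
    (α : ℝ) (p' : ℕ → ℝ)
    (hcsymm : ∀ i k l, cmat i k l = cmat i l k) (hcnn : ∀ i k l, 0 ≤ cmat i k l)
    (hdsymm : ∀ s t, d s t = d t s) (hdnn : ∀ s t, 0 ≤ d s t)
    (hα : 0 < α) (hp'nn : ∀ n, 0 ≤ p' n)
    (hcard : ∀ n (s : (i : Fin r) × Fin (mi i)),
      (((Finset.univ.filter fun v => typ n v = s)).card : ℝ) = a s.1 s.2 * n)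
    (cm δ ε ηm : ℝ)
    (hcm1 : 1 ≤ cm) (hcmb : ∀ i k l, cmat i k l ≤ cm)
    (hδ : 0 < δ) (hε : 0 < ε) (hηm : 0 < ηm)
    (hb : ∀ i k, 1 + 2 * δ ≤ α * ∑ l, a i l * cmat i k l)
    (hεδ : α * cm * ε ≤ δ)
    (hεA : ∀ i, ε ≤ (∑ l, a i l) / 2)
    (hηq : ∀ i, ∀ x : Fin (mi i) → ℝ, (∀ k, 0 ≤ x k) → (∀ k, x k ≤ a i k) →
      ε ≤ ∑ k, x k → ε ≤ ∑ k, (a i k - x k) →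
      ηm ≤ ∑ k, ∑ l, cmat i k l * x k * (a i l - x l))
    (n : ℕ) (hn1 : 1 ≤ n)
    (hsm : cm * (α * Real.log n / n) ≤ 1)
    (p : Fin r × Finset (Fin (N n))) (hp : p ∈ badIdxD typ n) :
    graphProb (pED typ cmat d α p' n) (E1D typ n p) ≤
      if ((p.2.card : ℝ) ≤ ε * n) then Real.exp (-(1 + δ) * Real.log n) ^ p.2.card
      else Real.exp (-(ηm * α) * (n * Real.log n)) := by
  obtain ⟨i, S⟩ := p
  simp only [badIdxD, Finset.mem_filter, Finset.mem_univ, true_and] at hp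
  obtain ⟨hSne, hSsub, hhalf⟩ := hp
  have hn0 : (0 : ℝ) < n := by exact_mod_cast hn1
  have hlog : 0 ≤ Real.log n := Real.log_nonneg (by exact_mod_cast hn1)
  have hpf : 0 ≤ α * Real.log n / n := pfun_nonneg α hα.le n
  have h0 := pED_nonneg typ cmat d α p' hcnn hdnn hα hp'nn n
  have h1 := pED_le_one typ cmat d α p' n
  have hsymE := pED_symm typ cmat d α p' hcsymm hdsymm n
  have hdisj : Disjoint S (blockFD typ n i \ S) := Finset.disjoint_sdiff
  have hPle : graphProb (pED typ cmat d α p' n) (E1D typ n (i, S)) ≤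
      Real.exp (- ∑ v ∈ S, ∑ w ∈ blockFD typ n i \ S, pED typ cmat d α p' n v w) :=
    graphProb_noAdj_le h0 h1 hsymE S _ hdisj
  have hSblk : ∀ v ∈ S, (typ n v).1 = i := fun v hv =>
    (Finset.mem_filter.mp (hSsub hv)).2
  have hTblk : ∀ w ∈ blockFD typ n i \ S, (typ n w).1 = i := fun w hw =>
    (Finset.mem_filter.mp (Finset.mem_sdiff.mp hw).1).2
  -- abbreviations (plain functions)
  set sk : Fin (mi i) → ℝ :=
    fun k => ((S.filter (fun v => typ n v = ⟨i, k⟩)).card : ℝ) with hsk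
  set tk : Fin (mi i) → ℝ :=
    fun l => (((blockFD typ n i \ S).filter (fun v => typ n v = ⟨i, l⟩)).card : ℝ) with htkdef
  have hsknn : ∀ k, 0 ≤ sk k := fun k => Nat.cast_nonneg _
  -- the cut weight identity
  have hW : ∑ v ∈ S, ∑ w ∈ blockFD typ n i \ S, pED typ cmat d α p' n v w =
      (α * Real.log n / n) * ∑ k, ∑ l, cmat i k l * sk k * tk l := by
    rw [show (∑ v ∈ S, ∑ w ∈ blockFD typ n i \ S, pED typ cmat d α p' n v w) =
      ∑ v ∈ S, ∑ w ∈ blockFD typ n i \ S,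
        blockEdgeP cmat d (α * Real.log n / n) (p' n) (typ n v) (typ n w) from rfl]
    rw [sum_pairs_by_type typ n S _ i i hSblk hTblk]
    rw [Finset.mul_sum]
    refine Finset.sum_congr rfl fun k _ => ?_
    rw [Finset.mul_sum]
    refine Finset.sum_congr rfl fun l _ => ?_
    have hle1 : cmat i k l * (α * Real.log n / n) ≤ 1 :=
      le_trans (mul_le_mul_of_nonneg_right (hcmb i k l) hpf) hsm
    rw [blockEdgeP_same, min_eq_left hle1, hsk, htkdef]
    ring
  -- count facts
  have htypF : ∀ l : Fin (mi i),
      ((Finset.univ.filter (fun v => typ n v = (⟨i, l⟩ : (i : Fin r) × Fin (mi i)))).card : ℝ)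
        = a i l * n := fun l => hcard n ⟨i, l⟩
  have hfst : ∀ (v : Fin (N n)) (l : Fin (mi i)),
      typ n v = (⟨i, l⟩ : (i : Fin r) × Fin (mi i)) → (typ n v).1 = i :=
    fun v l h => by rw [h]
  have hfil_sub : ∀ l : Fin (mi i), S.filter (fun v => typ n v = ⟨i, l⟩) ⊆
      Finset.univ.filter (fun v => typ n v = ⟨i, l⟩) :=
    fun l => Finset.filter_subset_filter _ (Finset.subset_univ S)
  have htc : ∀ l, tk l = a i l * n - sk l := by
    intro l
    have hset : (blockFD typ n i \ S).filter (fun v => typ n v = ⟨i, l⟩) =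
        Finset.univ.filter (fun v => typ n v = ⟨i, l⟩) \
          S.filter (fun v => typ n v = ⟨i, l⟩) := by
      ext v
      simp only [Finset.mem_filter, Finset.mem_sdiff, blockFD, Finset.mem_univ, true_and]
      constructor
      · rintro ⟨⟨_, hvS⟩, hvt⟩
        exact ⟨hvt, fun h => hvS h.1⟩
      · rintro ⟨hvt, hno⟩
        exact ⟨⟨hfst v l hvt, fun hvS => hno ⟨hvS, hvt⟩⟩, hvt⟩
    rw [htkdef]
    simp only [hset]
    rw [Finset.card_sdiff_of_subset (hfil_sub l), Nat.cast_sub (Finset.card_le_card (hfil_sub l)),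
      htypF l, hsk]
  have hskcard : ∑ k, sk k = (S.card : ℝ) := (card_by_type typ n S i hSblk).symm
  have hsk_le : ∀ k, sk k ≤ a i k * n := fun k => by
    simp only [hsk]
    rw [← htypF k]
    exact_mod_cast Finset.card_le_card (hfil_sub k)
  have hblkcard : ((blockFD typ n i).card : ℝ) = (∑ l, a i l) * n := by
    rw [card_by_type typ n (blockFD typ n i) i (fun v hv => (Finset.mem_filter.mp hv).2), Finset.sum_mul]
    refine Finset.sum_congr rfl fun l _ => ?_
    rw [← htypF l]
    congr 2
    ext v
    simp only [Finset.mem_filter, blockFD, Finset.mem_univ, true_and]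
    exact ⟨fun h => h.2, fun h => ⟨hfst v l h, h⟩⟩
  by_cases hsmall : ((S.card : ℝ) ≤ ε * n)
  · rw [if_pos hsmall]
    have hQ := algebra_small (a i) (cmat i) α cm δ ε n (S.card : ℝ) sk tk hα hsknn htc
      hskcard (hcmb i) (hb i) hεδ hcm1 hsmall hn0 hε
    have hWlow : (1 + δ) * (S.card : ℝ) * Real.log n ≤
        ∑ v ∈ S, ∑ w ∈ blockFD typ n i \ S, pED typ cmat d α p' n v w := by
      rw [hW]
      have := mul_le_mul_of_nonneg_left hQ hpf
      have heq : (α * Real.log n / n) * ((1 + δ) / α * n * (S.card : ℝ)) =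
          (1 + δ) * (S.card : ℝ) * Real.log n := by
        field_simp
      linarith [heq ▸ this]
    refine le_trans hPle ?_
    rw [← Real.exp_nat_mul]
    apply Real.exp_le_exp.mpr
    have : ((S.card : ℕ) : ℝ) * (-(1 + δ) * Real.log n) =
        -((1 + δ) * (S.card : ℝ) * Real.log n) := by ring
    rw [this]
    linarith
  · rw [if_neg hsmall]
    push_neg at hsmall
    have hhalf2 : 2 * (S.card : ℝ) ≤ (∑ l, a i l) * n := by
      rw [← hblkcard]
      exact_mod_cast hhalf
    have hQ := algebra_large (a i) (cmat i) ε ηm n (S.card : ℝ) sk tk hsknn htc hsk_le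
      hskcard (hηq i) hn0 hsmall.le hhalf2 (hεA i)
    have hWlow : (ηm * α) * (n * Real.log n) ≤
        ∑ v ∈ S, ∑ w ∈ blockFD typ n i \ S, pED typ cmat d α p' n v w := by
      rw [hW]
      have := mul_le_mul_of_nonneg_left hQ hpf
      have heq : (α * Real.log n / n) * (ηm * (n : ℝ) ^ 2) =
          (ηm * α) * (n * Real.log n) := by
        field_simp
      linarith [heq ▸ this]
    refine le_trans hPle (Real.exp_le_exp.mpr (by linarith))

lemma E2_tendsto {r : ℕ} {mi : Fin r → ℕ} {N : ℕ → ℕ}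
    (typ : ∀ n, Fin (N n) → (i : Fin r) × Fin (mi i))
    (a : ∀ i, Fin (mi i) → ℝ) (ha : ∀ i k, 0 < a i k)
    (cmat : ∀ i, Fin (mi i) → Fin (mi i) → ℝ)
    (d : ((i : Fin r) × Fin (mi i)) → ((i : Fin r) × Fin (mi i)) → ℝ)
    (α : ℝ) (p' : ℕ → ℝ)
    (hcsymm : ∀ i k l, cmat i k l = cmat i l k) (hcnn : ∀ i k l, 0 ≤ cmat i k l)
    (hdsymm : ∀ s t, d s t = d t s) (hdnn : ∀ s t, 0 ≤ d s t)
    (hα : 0 < α) (hp'nn : ∀ n, 0 ≤ p' n)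
    (hcard : ∀ n (s : (i : Fin r) × Fin (mi i)),
      (((Finset.univ.filter fun v => typ n v = s)).card : ℝ) = a s.1 s.2 * n)
    (hp'big : Filter.Tendsto (fun n : ℕ => (n : ℝ) ^ 2 * p' n) Filter.atTop Filter.atTop)
    (p : Fin r × Fin r) (hp : p ∈ crossIdxD d) :
    Filter.Tendsto (fun n => graphProb (pED typ cmat d α p' n) (E2D typ n p))
      Filter.atTop (nhds 0) := by
  obtain ⟨i, j⟩ := p
  simp only [crossIdxD, Finset.mem_filter, Finset.mem_univ, true_and,
    SimpleGraph.fromRel_adj] at hp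
  obtain ⟨hij, hrel⟩ := hp
  have hex : ∃ k l, 0 < d ⟨i, k⟩ ⟨j, l⟩ := by
    rcases hrel with h | h
    · exact h
    · obtain ⟨k, l, hkl⟩ := h
      exact ⟨l, k, by rw [hdsymm]; exact hkl⟩
  obtain ⟨k, l, hd0⟩ := hex
  -- pointwise bound
  have hbound : ∀ n : ℕ, graphProb (pED typ cmat d α p' n) (E2D typ n (i, j)) ≤
      Real.exp (-((a i k * a j l) *
        ((n : ℝ) ^ 2 * min (d ⟨i, k⟩ ⟨j, l⟩ * p' n) 1))) := by
    intro n
    have h0 := pED_nonneg typ cmat d α p' hcnn hdnn hα hp'nn n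
    have h1 := pED_le_one typ cmat d α p' n
    have hsymE := pED_symm typ cmat d α p' hcsymm hdsymm n
    have hiblk : ∀ v ∈ blockFD typ n i, (typ n v).1 = i :=
      fun v hv => (Finset.mem_filter.mp hv).2
    have hjblk : ∀ w ∈ blockFD typ n j, (typ n w).1 = j :=
      fun w hw => (Finset.mem_filter.mp hw).2
    have hdisj : Disjoint (blockFD typ n i) (blockFD typ n j) := by
      rw [Finset.disjoint_left]
      intro v hv hv'
      exact hij ((hiblk v hv).symm.trans (hjblk v hv'))
    have hPle := graphProb_noAdj_le h0 h1 hsymE (blockFD typ n i) (blockFD typ n j) hdisj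
    refine le_trans hPle (Real.exp_le_exp.mpr (neg_le_neg ?_))
    -- lower bound the weight sum by the (k,l) term
    have hWsum : ∑ v ∈ blockFD typ n i, ∑ w ∈ blockFD typ n j,
        pED typ cmat d α p' n v w =
        ∑ k' : Fin (mi i), ∑ l' : Fin (mi j),
          (((blockFD typ n i).filter (fun v => typ n v = ⟨i, k'⟩)).card : ℝ) *
          (((blockFD typ n j).filter (fun w => typ n w = ⟨j, l'⟩)).card : ℝ) *
          blockEdgeP cmat d (α * Real.log n / n) (p' n) ⟨i, k'⟩ ⟨j, l'⟩ :=
      sum_pairs_by_type typ n _ _ i j hiblk hjblk _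
    have hfilblk : ∀ (i' : Fin r) (k' : Fin (mi i')),
        ((blockFD typ n i').filter (fun v => typ n v = ⟨i', k'⟩)) =
        Finset.univ.filter (fun v => typ n v = ⟨i', k'⟩) := by
      intro i' k'
      ext v
      simp only [Finset.mem_filter, blockFD, Finset.mem_univ, true_and]
      exact ⟨fun h => h.2, fun h => ⟨by rw [h], h⟩⟩
    have hterm_nonneg : ∀ (k' : Fin (mi i)) (l' : Fin (mi j)),
        0 ≤ (((blockFD typ n i).filter (fun v => typ n v = ⟨i, k'⟩)).card : ℝ) *
          (((blockFD typ n j).filter (fun w => typ n w = ⟨j, l'⟩)).card : ℝ) *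
          blockEdgeP cmat d (α * Real.log n / n) (p' n) ⟨i, k'⟩ ⟨j, l'⟩ := by
      intro k' l'
      have := blockEdgeP_nonneg cmat d (α * Real.log n / n) (p' n) hcnn hdnn
        (pfun_nonneg α hα.le n) (hp'nn n) (⟨i, k'⟩ : (i : Fin r) × Fin (mi i)) ⟨j, l'⟩
      positivity
    have hsingle : (((blockFD typ n i).filter (fun v => typ n v = ⟨i, k⟩)).card : ℝ) *
          (((blockFD typ n j).filter (fun w => typ n w = ⟨j, l⟩)).card : ℝ) *
          blockEdgeP cmat d (α * Real.log n / n) (p' n) ⟨i, k⟩ ⟨j, l⟩ ≤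
        ∑ k' : Fin (mi i), ∑ l' : Fin (mi j),
          (((blockFD typ n i).filter (fun v => typ n v = ⟨i, k'⟩)).card : ℝ) *
          (((blockFD typ n j).filter (fun w => typ n w = ⟨j, l'⟩)).card : ℝ) *
          blockEdgeP cmat d (α * Real.log n / n) (p' n) ⟨i, k'⟩ ⟨j, l'⟩ := by
      refine le_trans (Finset.single_le_sum (f := fun l' =>
        (((blockFD typ n i).filter (fun v => typ n v = ⟨i, k⟩)).card : ℝ) *
        (((blockFD typ n j).filter (fun w => typ n w = ⟨j, l'⟩)).card : ℝ) *
        blockEdgeP cmat d (α * Real.log n / n) (p' n) ⟨i, k⟩ ⟨j, l'⟩)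
        (fun l' _ => hterm_nonneg k l') (Finset.mem_univ l)) ?_
      exact Finset.single_le_sum (f := fun k' => ∑ l' : Fin (mi j),
        (((blockFD typ n i).filter (fun v => typ n v = ⟨i, k'⟩)).card : ℝ) *
        (((blockFD typ n j).filter (fun w => typ n w = ⟨j, l'⟩)).card : ℝ) *
        blockEdgeP cmat d (α * Real.log n / n) (p' n) ⟨i, k'⟩ ⟨j, l'⟩)
        (fun k' _ => Finset.sum_nonneg fun l' _ => hterm_nonneg k' l') (Finset.mem_univ k)
    rw [hWsum]
    refine le_trans (le_of_eq ?_) hsingle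
    rw [hfilblk i k, hfilblk j l, hcard n ⟨i, k⟩, hcard n ⟨j, l⟩,
      blockEdgeP_diff cmat d _ _ hij]
    ring_nf
  -- limit of the bound
  have hX : Filter.Tendsto (fun n : ℕ => (a i k * a j l) *
      ((n : ℝ) ^ 2 * min (d ⟨i, k⟩ ⟨j, l⟩ * p' n) 1)) Filter.atTop Filter.atTop := by
    have haa : 0 < a i k * a j l := mul_pos (ha i k) (ha j l)
    refine Filter.Tendsto.const_mul_atTop haa ?_
    have h1 : Filter.Tendsto (fun n : ℕ => d ⟨i, k⟩ ⟨j, l⟩ * ((n : ℝ) ^ 2 * p' n))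
        Filter.atTop Filter.atTop := Filter.Tendsto.const_mul_atTop hd0 hp'big
    have h2 : Filter.Tendsto (fun n : ℕ => ((n : ℝ) ^ 2)) Filter.atTop Filter.atTop := by
      exact Filter.Tendsto.comp (Filter.tendsto_pow_atTop (by norm_num))
        tendsto_natCast_atTop_atTop
    rw [Filter.tendsto_atTop] at h1 h2 ⊢
    intro b
    filter_upwards [h1 b, h2 b] with n hb1 hb2
    calc b ≤ min (d ⟨i, k⟩ ⟨j, l⟩ * ((n : ℝ) ^ 2 * p' n)) ((n : ℝ) ^ 2) :=
          le_min hb1 hb2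
      _ ≤ (n : ℝ) ^ 2 * min (d ⟨i, k⟩ ⟨j, l⟩ * p' n) 1 := by
          rw [mul_min_of_nonneg _ _ (by positivity : (0:ℝ) ≤ (n : ℝ) ^ 2)]
          apply min_le_min
          · exact le_of_eq (by ring)
          · rw [mul_one]
  have hg : Filter.Tendsto (fun n : ℕ => Real.exp (-((a i k * a j l) *
      ((n : ℝ) ^ 2 * min (d ⟨i, k⟩ ⟨j, l⟩ * p' n) 1)))) Filter.atTop (nhds 0) :=
    Real.tendsto_exp_atBot.comp (Filter.tendsto_neg_atBot_iff.mpr hX)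
  refine squeeze_zero (fun n => ?_) hbound hg
  exact graphProb_nonneg (pED_nonneg typ cmat d α p' hcnn hdnn hα hp'nn n)
    (pED_le_one typ cmat d α p' n) _

lemma badIdx_sum_le {r : ℕ} {mi : Fin r → ℕ} {N : ℕ → ℕ}
    (typ : ∀ n, Fin (N n) → (i : Fin r) × Fin (mi i))
    (n : ℕ) (x e εn' : ℝ) (hx : 0 ≤ x) (he : 0 ≤ e) :
    ∑ p ∈ badIdxD typ n, (if ((p.2.card : ℝ) ≤ εn') then x ^ p.2.card else e) ≤
      (r : ℝ) * ((x + 1) ^ (N n) - 1) + (r : ℝ) * 2 ^ (N n) * e := by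
  have hstep : ∀ p ∈ badIdxD typ n,
      (if ((p.2.card : ℝ) ≤ εn') then x ^ p.2.card else e) ≤
      (if p.2.Nonempty then x ^ p.2.card else 0) + e := by
    intro p hp
    simp only [badIdxD, Finset.mem_filter] at hp
    rw [if_pos hp.2.1]
    split
    · linarith [pow_nonneg hx p.2.card]
    · linarith [pow_nonneg hx p.2.card]
  refine le_trans (Finset.sum_le_sum hstep) ?_
  rw [Finset.sum_add_distrib, Finset.sum_const, nsmul_eq_mul]
  have hA : ∑ p ∈ badIdxD typ n, (if p.2.Nonempty then x ^ p.2.card else 0) ≤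
      (r : ℝ) * ((x + 1) ^ (N n) - 1) := by
    refine le_trans (Finset.sum_le_sum_of_subset_of_nonneg
      (Finset.subset_univ (badIdxD typ n)) (fun p _ _ => by positivity)) ?_
    rw [Fintype.sum_prod_type]
    have hinner : ∀ i : Fin r, ∑ S : Finset (Fin (N n)),
        (if S.Nonempty then x ^ S.card else 0) = (x + 1) ^ (N n) - 1 := by
      intro i
      have h1 : ∀ S : Finset (Fin (N n)),
          (if S.Nonempty then x ^ S.card else 0) =
          x ^ S.card - (if S = ∅ then 1 else 0) := by
        intro S
        rcases Finset.eq_empty_or_nonempty S with h | h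
        · subst h
          simp
        · rw [if_pos h, if_neg (Finset.nonempty_iff_ne_empty.mp h)]
          ring
      rw [Finset.sum_congr rfl (fun S _ => h1 S), Finset.sum_sub_distrib]
      have h2 : ∑ S : Finset (Fin (N n)), x ^ S.card = (x + 1) ^ (N n) := by
        rw [← Finset.powerset_univ, sum_powerset_pow, Finset.card_univ, Fintype.card_fin]
      have h3 : ∑ S : Finset (Fin (N n)), (if S = ∅ then (1 : ℝ) else 0) = 1 := by
        rw [Finset.sum_ite_eq' Finset.univ (∅ : Finset (Fin (N n))) (fun _ => (1 : ℝ))]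
        simp
      rw [h2, h3]
    rw [Finset.sum_congr rfl (fun i _ => hinner i), Finset.sum_const, Finset.card_univ,
      Fintype.card_fin, nsmul_eq_mul]
  have hB : ((badIdxD typ n).card : ℝ) * e ≤ (r : ℝ) * 2 ^ (N n) * e := by
    refine mul_le_mul_of_nonneg_right ?_ he
    have h1 : (badIdxD typ n).card ≤ r * 2 ^ (N n) := by
      calc (badIdxD typ n).card ≤ Fintype.card (Fin r × Finset (Fin (N n))) :=
            Finset.card_le_univ _
        _ = r * 2 ^ (N n) := by
            rw [Fintype.card_prod, Fintype.card_fin, Fintype.card_finset, Fintype.card_fin]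
    exact_mod_cast h1
  linarith

/-- Multi-block model with `p(n) = α log n / n` and `p'(n) = o(p(n))`:
if `α b_k^{(i)} > 1` for all blocks `i` and types `k`, and `n² p'(n) → ∞`, then the graph
is connected w.h.p. -/
theorem multiblock_connectivity_supercritical
    (r : ℕ) (hr : 0 < r) (mi : Fin r → ℕ) (hmi : ∀ i, 0 < mi i)
    (a : ∀ i, Fin (mi i) → ℝ) (ha : ∀ i k, 0 < a i k)
    (cmat : ∀ i, Fin (mi i) → Fin (mi i) → ℝ)
    (hcsymm : ∀ i k l, cmat i k l = cmat i l k) (hcnn : ∀ i k l, 0 ≤ cmat i k l)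
    (hirr : ∀ i, (SimpleGraph.fromRel (fun k l : Fin (mi i) => 0 < cmat i k l)).Connected)
    (d : ((i : Fin r) × Fin (mi i)) → ((i : Fin r) × Fin (mi i)) → ℝ)
    (hdsymm : ∀ s t, d s t = d t s) (hdnn : ∀ s t, 0 ≤ d s t)
    (hblk : (SimpleGraph.fromRel
      (fun i j : Fin r => ∃ k l, 0 < d ⟨i, k⟩ ⟨j, l⟩)).Connected)
    (α : ℝ) (hα : 0 < α)
    (p' : ℕ → ℝ) (hp'nn : ∀ n, 0 ≤ p' n)
    (hp'o : p' =o[atTop] fun n : ℕ => α * Real.log n / n)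
    (N : ℕ → ℕ) (typ : ∀ n, Fin (N n) → (i : Fin r) × Fin (mi i))
    (hcard : ∀ n (s : (i : Fin r) × Fin (mi i)),
      (((Finset.univ.filter fun v => typ n v = s)).card : ℝ) = a s.1 s.2 * n)
    (hsup : ∀ i k, 1 < α * (∑ l, a i l * cmat i k l))
    (hp'big : Tendsto (fun n : ℕ => (n : ℝ) ^ 2 * p' n) atTop atTop) :
    Tendsto (fun n : ℕ =>
        graphProb (fun v w =>
            blockEdgeP cmat d (α * Real.log n / n) (p' n) (typ n v) (typ n w))
          {G | G.Connected})
      atTop (nhds 1) := by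
  classical
  have i0 : Fin r := ⟨0, hr⟩
  have hTne : Nonempty ((i : Fin r) × Fin (mi i)) := ⟨⟨i0, ⟨0, hmi i0⟩⟩⟩
  have hFinrne : Nonempty (Fin r) := ⟨i0⟩
  -- constants
  set δ : ℝ := ((Finset.univ.inf' Finset.univ_nonempty
    (fun s : (i : Fin r) × Fin (mi i) => α * ∑ l, a s.1 l * cmat s.1 s.2 l)) - 1) / 2 with hδdef
  have hinf1 : 1 < Finset.univ.inf' Finset.univ_nonempty
      (fun s : (i : Fin r) × Fin (mi i) => α * ∑ l, a s.1 l * cmat s.1 s.2 l) := by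
    rw [Finset.lt_inf'_iff]
    exact fun s _ => hsup s.1 s.2
  have hδ : 0 < δ := by rw [hδdef]; linarith
  have hb : ∀ i k, 1 + 2 * δ ≤ α * ∑ l, a i l * cmat i k l := by
    intro i k
    have := Finset.inf'_le (b := (⟨i, k⟩ : (i : Fin r) × Fin (mi i)))
      (fun s : (i : Fin r) × Fin (mi i) => α * ∑ l, a s.1 l * cmat s.1 s.2 l)
      (Finset.mem_univ _)
    rw [hδdef]
    linarith
  set cm : ℝ := 1 + ∑ s : (i : Fin r) × Fin (mi i), ∑ l, cmat s.1 s.2 l with hcmdef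
  have hcm1 : 1 ≤ cm := by
    rw [hcmdef]
    have : (0:ℝ) ≤ ∑ s : (i : Fin r) × Fin (mi i), ∑ l, cmat s.1 s.2 l :=
      Finset.sum_nonneg fun s _ => Finset.sum_nonneg fun l _ => hcnn _ _ _
    linarith
  have hcmb : ∀ i k l, cmat i k l ≤ cm := by
    intro i k l
    have h1 : cmat i k l ≤ ∑ l', cmat i k l' :=
      Finset.single_le_sum (fun l' _ => hcnn i k l') (Finset.mem_univ l)
    have h2 : (∑ l', cmat i k l') ≤ ∑ s : (i : Fin r) × Fin (mi i), ∑ l', cmat s.1 s.2 l' :=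
      Finset.single_le_sum (f := fun s : (i : Fin r) × Fin (mi i) => ∑ l', cmat s.1 s.2 l')
        (fun s _ => Finset.sum_nonneg fun l' _ => hcnn _ _ _)
        (Finset.mem_univ (⟨i, k⟩ : (i : Fin r) × Fin (mi i)))
    rw [hcmdef]
    linarith
  have hcm0 : 0 < cm := lt_of_lt_of_le one_pos hcm1
  set ε : ℝ := min (δ / (α * cm))
    (Finset.univ.inf' Finset.univ_nonempty (fun i : Fin r => (∑ l, a i l) / 2)) with hεdef
  have hApos : ∀ i : Fin r, 0 < ∑ l, a i l := by
    intro i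
    have : Nonempty (Fin (mi i)) := ⟨⟨0, hmi i⟩⟩
    exact Finset.sum_pos (fun l _ => ha i l) Finset.univ_nonempty
  have hε : 0 < ε := by
    rw [hεdef]
    refine lt_min (by positivity) ?_
    rw [Finset.lt_inf'_iff]
    intro i _
    linarith [hApos i]
  have hεδ : α * cm * ε ≤ δ := by
    have h1 : ε ≤ δ / (α * cm) := min_le_left _ _
    rw [← le_div_iff₀' (by positivity)]
    exact h1
  have hεA : ∀ i, ε ≤ (∑ l, a i l) / 2 := fun i =>
    le_trans (min_le_right _ _) (Finset.inf'_le _ (Finset.mem_univ i))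
  -- claimC data
  have hpos : ∀ i k, ∃ l, 0 < cmat i k l := by
    intro i k
    by_contra hno
    push_neg at hno
    have hz : ∀ l, cmat i k l = 0 := fun l => le_antisymm (hno l) (hcnn i k l)
    have hzero : (∑ l, a i l * cmat i k l) = 0 :=
      Finset.sum_eq_zero fun l _ => by rw [hz l, mul_zero]
    have h := hsup i k
    rw [hzero, mul_zero] at h
    exact absurd h (by norm_num)
  have hclaim : ∀ i : Fin r, ∃ η > 0, ∀ x : Fin (mi i) → ℝ,
      (∀ k, 0 ≤ x k) → (∀ k, x k ≤ a i k) →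
      ε ≤ ∑ k, x k → ε ≤ ∑ k, (a i k - x k) →
      η ≤ ∑ k, ∑ l, cmat i k l * x k * (a i l - x l) := fun i =>
    claimC (a i) (ha i) (cmat i) (hcsymm i) (hcnn i) (hirr i) (hpos i) ε hε
  set ηfun : Fin r → ℝ := fun i => (hclaim i).choose with hηfundef
  have hηfun_pos : ∀ i, 0 < ηfun i := fun i => (hclaim i).choose_spec.1
  have hηfun_spec := fun i => (hclaim i).choose_spec.2
  set ηm : ℝ := Finset.univ.inf' Finset.univ_nonempty ηfun with hηmdef
  have hηm : 0 < ηm := by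
    rw [hηmdef, Finset.lt_inf'_iff]
    exact fun i _ => hηfun_pos i
  have hηq : ∀ i, ∀ x : Fin (mi i) → ℝ, (∀ k, 0 ≤ x k) → (∀ k, x k ≤ a i k) →
      ε ≤ ∑ k, x k → ε ≤ ∑ k, (a i k - x k) →
      ηm ≤ ∑ k, ∑ l, cmat i k l * x k * (a i l - x l) := by
    intro i x h1 h2 h3 h4
    exact le_trans (by rw [hηmdef]; exact Finset.inf'_le _ (Finset.mem_univ i))
      (hηfun_spec i x h1 h2 h3 h4)
  -- N n as real
  set Atot : ℝ := ∑ s : (i : Fin r) × Fin (mi i), a s.1 s.2 with hAtotdef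
  have hAtot : 0 < Atot := by
    rw [hAtotdef]
    exact Finset.sum_pos (fun s _ => ha s.1 s.2) Finset.univ_nonempty
  have hNreal : ∀ n, (N n : ℝ) = Atot * n := by
    intro n
    have h1 := sum_comp_typ (Finset.univ : Finset (Fin (N n))) (typ n) (fun _ => (1:ℝ))
    simp only [mul_one] at h1
    rw [Finset.sum_const, nsmul_eq_mul, mul_one, Finset.card_univ, Fintype.card_fin] at h1
    rw [h1, hAtotdef, Finset.sum_mul]
    exact Finset.sum_congr rfl fun s _ => hcard n s
  -- eventual smallness of cm * p
  have hploglim : Filter.Tendsto (fun n : ℕ => cm * (α * Real.log n / n))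
      Filter.atTop (nhds 0) := by
    have h1 : Filter.Tendsto (fun x : ℝ => Real.log x / x) Filter.atTop (nhds 0) :=
      Real.isLittleO_log_id_atTop.tendsto_div_nhds_zero
    have h2 : Filter.Tendsto (fun n : ℕ => Real.log n / n) Filter.atTop (nhds 0) :=
      h1.comp tendsto_natCast_atTop_atTop
    have h3 : (fun n : ℕ => cm * (α * Real.log n / n)) =
        fun n : ℕ => (cm * α) * (Real.log n / n) := by
      funext n
      ring
    rw [h3]
    simpa using h2.const_mul (cm * α)
  have hev_sm : ∀ᶠ n : ℕ in Filter.atTop, cm * (α * Real.log n / n) ≤ 1 :=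
    (hploglim.eventually_lt_const one_pos).mono fun n h => le_of_lt h
  have hbne : ∀ n : ℕ, 1 ≤ n → ∀ i : Fin r, ∃ v : Fin (N n), (typ n v).1 = i := by
    intro n hn i
    have hcpos : 0 < ((Finset.univ.filter
        fun v : Fin (N n) => typ n v = ⟨i, ⟨0, hmi i⟩⟩)).card := by
      have hc := hcard n ⟨i, ⟨0, hmi i⟩⟩
      have hpos' : (0:ℝ) < a i ⟨0, hmi i⟩ * n := by
        have h1n : (1:ℝ) ≤ n := by exact_mod_cast hn
        nlinarith [ha i ⟨0, hmi i⟩]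
      rw [← hc] at hpos'
      exact_mod_cast hpos'
    obtain ⟨v, hv⟩ := Finset.card_pos.mp hcpos
    exact ⟨v, by rw [(Finset.mem_filter.mp hv).2]⟩
  -- the three bound functions
  set u : ℕ → ℝ := fun n => Real.exp (-(1 + δ) * Real.log n) with hu
  set e3 : ℕ → ℝ := fun n => Real.exp (-(ηm * α) * (n * Real.log n)) with he3
  set S1 : ℕ → ℝ := fun n =>
    ∑ p ∈ crossIdxD d, graphProb (pED typ cmat d α p' n) (E2D typ n p) with hS1
  set S23 : ℕ → ℝ := fun n =>
    (r:ℝ) * ((u n + 1) ^ (N n) - 1) + (r:ℝ) * 2 ^ (N n) * e3 n with hS23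
  have hmain : ∀ᶠ n : ℕ in Filter.atTop,
      graphProb (pED typ cmat d α p' n) {G | ¬ G.Connected} ≤ S1 n + S23 n := by
    filter_upwards [Filter.eventually_ge_atTop 1, hev_sm] with n hn1 hsm
    have h1 := prob_not_connected_le typ cmat d α p' hcnn hdnn hα hp'nn hr hblk n
      (hbne n hn1)
    have h2 : ∑ p ∈ badIdxD typ n, graphProb (pED typ cmat d α p' n) (E1D typ n p) ≤
        S23 n := by
      refine le_trans (Finset.sum_le_sum (fun p hp =>
        E1_bound typ a cmat d α p' hcsymm hcnn hdsymm hdnn hα hp'nn hcard cm δ ε ηm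
          hcm1 hcmb hδ hε hηm hb hεδ hεA hηq n hn1 hsm p hp)) ?_
      exact badIdx_sum_le typ n (u n) (e3 n) (ε * n) (Real.exp_nonneg _)
        (Real.exp_nonneg _)
    rw [hS1]
    linarith
  -- limits
  have hS1lim : Filter.Tendsto S1 Filter.atTop (nhds 0) := by
    have h := tendsto_finset_sum (crossIdxD d) (fun p hp =>
      E2_tendsto typ a ha cmat d α p' hcsymm hcnn hdsymm hdnn hα hp'nn hcard hp'big p hp)
    simpa using h
  have hNu : Filter.Tendsto (fun n : ℕ => (N n : ℝ) * u n) Filter.atTop (nhds 0) := by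
    have hEq : (fun n : ℕ => Atot * Real.exp (-δ * Real.log n)) =ᶠ[Filter.atTop]
        (fun n : ℕ => (N n : ℝ) * u n) := by
      filter_upwards [Filter.eventually_ge_atTop 1] with n hn1
      have hnpos : (0:ℝ) < n := by exact_mod_cast hn1
      rw [hNreal n, hu]
      calc Atot * Real.exp (-δ * Real.log n)
          = Atot * Real.exp (Real.log n + -(1 + δ) * Real.log n) := by
            rw [show Real.log n + -(1 + δ) * Real.log n = -δ * Real.log n from by ring]
        _ = Atot * (Real.exp (Real.log n) * Real.exp (-(1 + δ) * Real.log n)) := by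
            rw [Real.exp_add]
        _ = Atot * n * Real.exp (-(1 + δ) * Real.log n) := by
            rw [Real.exp_log hnpos]
            ring
    have h4 : Filter.Tendsto (fun n : ℕ => -δ * Real.log n) Filter.atTop Filter.atBot := by
      refine Filter.Tendsto.const_mul_atTop_of_neg (by linarith) ?_
      exact Real.tendsto_log_atTop.comp tendsto_natCast_atTop_atTop
    have h5 : Filter.Tendsto (fun n : ℕ => Atot * Real.exp (-δ * Real.log n))
        Filter.atTop (nhds 0) := by
      have := (Real.tendsto_exp_atBot.comp h4).const_mul Atot
      simpa using this
    exact h5.congr' hEq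
  have hpow : Filter.Tendsto (fun n : ℕ => (u n + 1) ^ (N n)) Filter.atTop (nhds 1) := by
    have hup : ∀ n, 0 ≤ u n := fun n => (Real.exp_nonneg _)
    have hlow : ∀ n : ℕ, (1:ℝ) ≤ (u n + 1) ^ (N n) := fun n =>
      one_le_pow₀ (by linarith [hup n])
    have hhigh : ∀ n : ℕ, (u n + 1) ^ (N n) ≤ Real.exp ((N n : ℝ) * u n) := by
      intro n
      calc (u n + 1) ^ (N n) ≤ Real.exp (u n) ^ (N n) :=
            pow_le_pow_left₀ (by linarith [hup n]) (Real.add_one_le_exp (u n)) (N n)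
        _ = Real.exp ((N n : ℝ) * u n) := (Real.exp_nat_mul _ _).symm
    have hupperlim : Filter.Tendsto (fun n : ℕ => Real.exp ((N n : ℝ) * u n))
        Filter.atTop (nhds 1) := by
      have := (Real.continuous_exp.tendsto 0).comp hNu
      simpa [Function.comp_def] using this
    exact tendsto_of_tendsto_of_tendsto_of_le_of_le tendsto_const_nhds hupperlim hlow hhigh
  have hS2lim : Filter.Tendsto (fun n : ℕ => (r:ℝ) * ((u n + 1) ^ (N n) - 1))
      Filter.atTop (nhds 0) := by
    have := (hpow.sub_const 1).const_mul (r:ℝ)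
    simpa using this
  have hS3lim : Filter.Tendsto (fun n : ℕ => (r:ℝ) * 2 ^ (N n) * e3 n)
      Filter.atTop (nhds 0) := by
    have hevlog : ∀ᶠ n : ℕ in Filter.atTop,
        Atot * Real.log 2 + 1 ≤ ηm * α * Real.log n := by
      have h6 : Filter.Tendsto (fun n : ℕ => ηm * α * Real.log n) Filter.atTop
          Filter.atTop :=
        Filter.Tendsto.const_mul_atTop (by positivity)
          (Real.tendsto_log_atTop.comp tendsto_natCast_atTop_atTop)
      exact h6.eventually_ge_atTop _
    have hbnd : ∀ᶠ n : ℕ in Filter.atTop,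
        (r:ℝ) * 2 ^ (N n) * e3 n ≤ (r:ℝ) * Real.exp (-(n:ℝ)) := by
      filter_upwards [hevlog] with n hl
      have h2p : Real.exp ((N n : ℝ) * Real.log 2) = (2:ℝ) ^ (N n) := by
        rw [Real.exp_nat_mul, Real.exp_log (show (0:ℝ) < 2 by norm_num)]
      rw [he3, ← h2p, mul_assoc, ← Real.exp_add]
      refine mul_le_mul_of_nonneg_left (Real.exp_le_exp.mpr ?_) (by positivity)
      rw [hNreal n]
      have hn0 : (0:ℝ) ≤ n := Nat.cast_nonneg n
      nlinarith [hl, hn0]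
    have hglim : Filter.Tendsto (fun n : ℕ => (r:ℝ) * Real.exp (-(n:ℝ)))
        Filter.atTop (nhds 0) := by
      have h7 : Filter.Tendsto (fun n : ℕ => -(n:ℝ)) Filter.atTop Filter.atBot :=
        Filter.tendsto_neg_atBot_iff.mpr tendsto_natCast_atTop_atTop
      have := (Real.tendsto_exp_atBot.comp h7).const_mul (r:ℝ)
      simpa using this
    refine squeeze_zero' (Filter.Eventually.of_forall fun n => ?_) hbnd hglim
    have := Real.exp_nonneg (-(ηm * α) * (n * Real.log n))
    rw [he3]
    positivity
  have hS23lim : Filter.Tendsto S23 Filter.atTop (nhds 0) := by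
    have := hS2lim.add hS3lim
    simpa [hS23] using this
  have hsum : Filter.Tendsto (fun n => S1 n + S23 n) Filter.atTop (nhds 0) := by
    have := hS1lim.add hS23lim
    simpa using this
  have hnc : Filter.Tendsto
      (fun n => graphProb (pED typ cmat d α p' n) {G | ¬ G.Connected})
      Filter.atTop (nhds 0) := by
    refine squeeze_zero' (Filter.Eventually.of_forall fun n => ?_) hmain hsum
    exact graphProb_nonneg (pED_nonneg typ cmat d α p' hcnn hdnn hα hp'nn n)
      (pED_le_one typ cmat d α p' n) _
  have hfin : ∀ n, graphProb (pED typ cmat d α p' n) {G | G.Connected} =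
      1 - graphProb (pED typ cmat d α p' n) {G | ¬ G.Connected} := by
    intro n
    have h := graphProb_compl (pE := pED typ cmat d α p' n)
      {G : SimpleGraph (Fin (N n)) | G.Connected}
    rw [Set.compl_setOf] at h
    linarith
  have hfinal : (fun n : ℕ =>
      graphProb (fun v w =>
          blockEdgeP cmat d (α * Real.log n / n) (p' n) (typ n v) (typ n w))
        {G | G.Connected}) =
      fun n => 1 - graphProb (pED typ cmat d α p' n) {G | ¬ G.Connected} :=
    funext fun n => hfin n
  rw [hfinal]
  have := hnc.const_sub 1
  simpa using this
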